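/- Let k be a field with a ring automorphism σ satisfying σ∘σ = id, let β ∈ GL(n,k), and let T ∈ GL(n,k) satisfy ᵀ(σT)·β·T = β, where σT applies σ to each entry of T. Define B(u,v) = ᵀ(σu)·β·v for column vectors u, v ∈ kⁿ. Let f ∈ k[x] be a polynomial of degree d with f(0) ≠ 0, and let f̃(x) = σ(f(0))⁻¹ · x^d · (σf)(x⁻¹) be its U-reciprocal polynomial. Then the image of f(T) and the kernel of f̃(T) are mutually orthogonal with respect to B: for all u, w ∈ kⁿ, if f̃(T)·u = 0 then B(u, f(T)·w) = 0. -/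

import Mathlib

open Matrix Polynomial

/-- For a unitary transformation `T` with respect to the sesquilinear form
`B(u, v) = ᵀ(σu)·β·v` (where `σ` is an involutive automorphism of `k`), and a polynomial
`f` with `f(0) ≠ 0`, the image of `f(T)` and the kernel of the U-reciprocal polynomial
`f̃(x) = σ(f(0))⁻¹·x^deg f·(σf)(x⁻¹)` evaluated at `T` are mutually orthogonal. -/
theorem image_orthogonal_ker_reciprocal {n : ℕ} {k : Type*} [Field k]
    (σ : k →+* k) (hσ : ∀ a : k, σ (σ a) = a)
    (β T : Matrix (Fin n) (Fin n) k) (hβ : IsUnit β.det) (hT : IsUnit T.det)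
    (hTisom : (T.map σ)ᵀ * β * T = β)
    (f : Polynomial k) (hf0 : f.coeff 0 ≠ 0)
    (u w : Fin n → k)
    (hu : (aeval T) (C (σ (f.coeff 0))⁻¹ * (f.map σ).reverse) *ᵥ u = 0) :
    (fun i => σ (u i)) ⬝ᵥ (β *ᵥ ((aeval T) f *ᵥ w)) = 0 := by
  have hc : σ (f.coeff 0) ≠ 0 := by
    intro h
    apply hf0
    have := congrArg σ h
    rwa [hσ, map_zero] at this
  set d := f.natDegree with hd
  set A := (T.map σ)ᵀ with hA
  have hpow : ∀ m : ℕ, (T ^ m).map σ = (T.map σ) ^ m := by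
    intro m
    exact map_pow (σ.mapMatrix (m := Fin n)) T m
  have h1 : ∀ m : ℕ, A ^ m * β * T ^ m = β := by
    intro m
    induction m with
    | zero => simp
    | succ m ih =>
      calc A ^ (m+1) * β * T ^ (m+1) = A ^ m * (A * β * T) * T ^ m := by
            rw [pow_succ, pow_succ']
            simp only [mul_assoc]
        _ = β := by rw [hTisom, ih]
  have hNu : (aeval T ((f.map σ).reverse)) *ᵥ u = 0 := by
    have h2 : (f.map σ).reverse
        = C (σ (f.coeff 0)) * (C (σ (f.coeff 0))⁻¹ * (f.map σ).reverse) := by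
      rw [← mul_assoc, ← C_mul, mul_inv_cancel₀ hc, C_1, one_mul]
    rw [h2, _root_.map_mul, ← mulVec_mulVec, hu, mulVec_zero]
  have hdm : (f.map σ).natDegree = d := natDegree_map σ
  have hgd : ((f.map σ).reverse).natDegree < d + 1 :=
    lt_of_le_of_lt (le_trans (f.map σ).reverse_natDegree_le hdm.le) (lt_add_one d)
  have hN : aeval T ((f.map σ).reverse)
      = ∑ i ∈ Finset.range (d+1), σ (f.coeff (d - i)) • T ^ i := by
    rw [aeval_eq_sum_range' hgd]
    refine Finset.sum_congr rfl fun i hi => ?_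
    rw [coeff_reverse, hdm, revAt_le (Nat.lt_succ_iff.mp (Finset.mem_range.mp hi)), coeff_map]
  have hmapt : ((aeval T ((f.map σ).reverse)).map σ)ᵀ
      = ∑ i ∈ Finset.range (d+1), f.coeff (d - i) • A ^ i := by
    rw [hN]
    ext i j
    simp only [Matrix.map_apply, Matrix.transpose_apply, Matrix.sum_apply, Matrix.smul_apply,
      smul_eq_mul, map_sum, _root_.map_mul, hσ, hA, ← Matrix.transpose_pow]
    refine Finset.sum_congr rfl fun x _ => ?_
    rw [← Matrix.map_apply (f := σ), hpow]
  have key : β * aeval T f = ((aeval T ((f.map σ).reverse)).map σ)ᵀ * β * T ^ d := by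
    rw [hmapt, Finset.sum_mul, Finset.sum_mul,
      aeval_eq_sum_range' (lt_add_one f.natDegree) T, Finset.mul_sum, ← hd,
      ← Finset.sum_range_reflect]
    refine Finset.sum_congr rfl fun i hi => ?_
    have hi' : i ≤ d := Nat.lt_succ_iff.mp (Finset.mem_range.mp hi)
    simp only [Nat.add_sub_cancel]
    rw [mul_smul_comm, smul_mul_assoc, smul_mul_assoc]
    congr 1
    symm
    calc A ^ i * β * T ^ d = A ^ i * β * (T ^ i * T ^ (d - i)) := by
          rw [← pow_add, Nat.add_sub_cancel' hi']
      _ = (A ^ i * β * T ^ i) * T ^ (d - i) := by simp only [mul_assoc]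
      _ = β * T ^ (d - i) := by rw [h1]
  have goal2 : β *ᵥ ((aeval T) f *ᵥ w)
      = (((aeval T ((f.map σ).reverse)).map σ)ᵀ) *ᵥ ((β * T ^ d) *ᵥ w) := by
    rw [mulVec_mulVec, mulVec_mulVec, ← Matrix.mul_assoc, ← key]
  rw [goal2, dotProduct_mulVec, ← mulVec_transpose, transpose_transpose]
  have : (aeval T ((f.map σ).reverse)).map σ *ᵥ (fun i => σ (u i)) = 0 := by
    ext i
    have h0 : ∀ j, (0 : Fin n → k) j = 0 := fun _ => rfl
    have := congrFun hNu i
    simp only [mulVec, dotProduct, Matrix.map_apply, Pi.zero_apply] at this ⊢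
    calc ∑ j, σ ((aeval T ((f.map σ).reverse)) i j) * σ (u j)
        = σ (∑ j, (aeval T ((f.map σ).reverse)) i j * u j) := by rw [map_sum]; simp [_root_.map_mul]
      _ = 0 := by rw [this, map_zero]
  rw [this, zero_dotProduct]
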